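/- Let G be a finite abelian group of order q and MDS(n,d) ≤ G^n an additive MDS code with homogeneous weight enumerator M_{n,d}(x,y) = ∑_{c ∈ MDS(n,d)} x^{n−wt(c)} y^{wt(c)}. Then (M_{n,d}(x,y) − x^n)/(q−1) equals the coefficient of t^{n−d} in the formal power series [xt + y(1−t)]^n / ((1−t)(1−qt)). -/

import Mathlib

open Finset

section Aux

variable {G : Type*} [AddCommGroup G] [Fintype G] [DecidableEq G]

lemma aux_small_support {n d : ℕ} (C : AddSubgroup (Fin n → G))
    (hlb : ∀ c ∈ C, c ≠ 0 → d ≤ hammingNorm c)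
    {c : Fin n → G} (hc : c ∈ C) (S : Finset (Fin n)) (hS : S.card < d)
    (hsupp : ∀ i, c i ≠ 0 → i ∈ S) : c = 0 := by
  by_contra h
  have hd : d ≤ hammingNorm c := hlb _ hc h
  have hle : hammingNorm c ≤ S.card := by
    unfold hammingNorm
    apply Finset.card_le_card
    intro i hi
    simp only [Finset.mem_filter] at hi
    exact hsupp i hi.2
  omega

lemma card_filter_support {n d : ℕ} (C : AddSubgroup (Fin n → G))
    (CF : Finset (Fin n → G)) (hCF : ∀ c, c ∈ CF ↔ c ∈ C)
    (hcard : Nat.card C = Fintype.card G ^ (n + 1 - d))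
    (hlb : ∀ c ∈ C, c ≠ 0 → d ≤ hammingNorm c)
    (hd1 : 1 ≤ d) (hdn : d ≤ n) (T : Finset (Fin n)) :
    (CF.filter (fun c => ∀ i ∉ T, c i = 0)).card = Fintype.card G ^ (T.card + 1 - d) := by
  classical
  have hTn : T.card ≤ n := by
    simpa using Finset.card_le_card (Finset.subset_univ T)
  rcases lt_or_ge (T.card + 1) d with hgt | hle
  · -- small case : only the zero codeword
    have hzero : CF.filter (fun c => ∀ i ∉ T, c i = 0) = {0} := by
      ext c
      simp only [Finset.mem_filter, Finset.mem_singleton, hCF]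
      constructor
      · rintro ⟨hc, hz⟩
        refine aux_small_support C hlb hc T (by omega) ?_
        intro i hi
        by_contra hiT
        exact hi (hz i hiT)
      · rintro rfl
        exact ⟨zero_mem C, fun i _ => rfl⟩
    rw [hzero, Finset.card_singleton]
    have : T.card + 1 - d = 0 := by omega
    rw [this, pow_zero]
  · -- main case
    have hcompl : (Tᶜ : Finset (Fin n)).card = n - T.card := by
      simp [Finset.card_compl]
    obtain ⟨U, hTU, hUuniv, hUcard⟩ := Finset.exists_subsuperset_card_eq
      (Finset.subset_univ (Tᶜ : Finset (Fin n)))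
      (by rw [hcompl]; omega : (Tᶜ : Finset (Fin n)).card ≤ n + 1 - d)
      (by simp; omega)
    have hUc : (Uᶜ : Finset (Fin n)).card < d := by
      rw [Finset.card_compl, hUcard]
      simp
      omega
    haveI : Fintype ↥C := Fintype.ofFinite _
    set res : (Fin n → G) → (↥U → G) := fun c j => c j with hres
    have hinj : Function.Injective (fun c : ↥C => res c.1) := by
      intro a b hab
      have hmem : (a : Fin n → G) - b ∈ C := sub_mem a.2 b.2
      have hz : (a : Fin n → G) - b = 0 := by
        refine aux_small_support C hlb hmem Uᶜ hUc ?_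
        intro i hi
        rw [Finset.mem_compl]
        intro hiU
        apply hi
        have := congrFun hab ⟨i, hiU⟩
        simpa [res, sub_eq_zero] using this
      exact Subtype.ext (sub_eq_zero.mp hz)
    have hbij : Function.Bijective (fun c : ↥C => res c.1) := by
      rw [Fintype.bijective_iff_injective_and_card]
      refine ⟨hinj, ?_⟩
      rw [Fintype.card_fun, Fintype.card_coe, hUcard, ← Nat.card_eq_fintype_card, hcard]
    have hmain : (CF.filter (fun c => ∀ i ∉ T, c i = 0)).card
        = Fintype.card (↥(U \ Tᶜ) → G) := by
      rw [← Finset.card_univ]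
      apply Finset.card_bij (fun c _ => fun j : ↥(U \ Tᶜ) => c j)
      · intros; exact Finset.mem_univ _
      · intro a ha b hb hab
        simp only [Finset.mem_filter, hCF] at ha hb
        have hz : a - b = 0 := by
          refine aux_small_support C hlb (sub_mem ha.1 hb.1) Uᶜ hUc ?_
          intro i hi
          rw [Finset.mem_compl]
          intro hiU
          apply hi
          rcases Finset.decidableMem i Tᶜ with hiT | hiT
          · -- i ∉ Tᶜ case first? careful
            have hiUT : i ∈ U \ Tᶜ := Finset.mem_sdiff.2 ⟨hiU, hiT⟩
            have := congrFun hab ⟨i, hiUT⟩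
            simpa [sub_eq_zero] using this
          · have hiT' : i ∉ T := Finset.mem_compl.mp hiT
            simp [ha.2 i hiT', hb.2 i hiT']
        exact sub_eq_zero.mp hz
      · intro w _
        set v : Fin n → G := fun i => if h : i ∈ U \ Tᶜ then w ⟨i, h⟩ else 0 with hv
        obtain ⟨⟨c, hcC⟩, hc⟩ := hbij.2 (res v)
        have hcv : ∀ i (h : i ∈ U), c i = v i := by
          intro i h
          exact congrFun hc ⟨i, h⟩
        refine ⟨c, ?_, ?_⟩
        · rw [Finset.mem_filter, hCF]
          refine ⟨hcC, ?_⟩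
          intro i hi
          have hiTc : i ∈ (Tᶜ : Finset (Fin n)) := Finset.mem_compl.2 hi
          have hiU : i ∈ U := hTU hiTc
          rw [hcv i hiU, hv]
          exact dif_neg (fun hmem => (Finset.mem_sdiff.mp hmem).2 hiTc)
        · funext j
          have hjU : j.1 ∈ U := (Finset.mem_sdiff.mp j.2).1
          rw [hcv j.1 hjU, hv]
          simp only []
          rw [dif_pos j.2]
    rw [hmain, Fintype.card_fun, Fintype.card_coe, Finset.card_sdiff_of_subset hTU, hUcard, hcompl]
    have hE : n + 1 - d - (n - #T) = #T + 1 - d := by clear_value res; clear hres res hinj hbij hmain this hCF hcard hlb; omega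
    rw [hE]

-- Step 2 : sum manipulation
section Step2

open MvPolynomial

lemma powerset_binomial {α : Type*} [DecidableEq α] (s : Finset α)
    {A : Type*} [CommRing A] (a b : A) :
    ∑ t ∈ s.powerset, a ^ t.card * b ^ (s.card - t.card) = (a + b) ^ s.card := by
  rw [← Finset.prod_const (a + b), Finset.prod_add]
  apply Finset.sum_congr rfl
  intro t ht
  rw [Finset.prod_const, Finset.prod_const,
    Finset.card_sdiff_of_subset (Finset.mem_powerset.mp ht)]

lemma single_word {n : ℕ} (c : Fin n → G) :
    (X 0 : MvPolynomial (Fin 2) ℚ) ^ (n - hammingNorm c) * X 1 ^ hammingNorm c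
      = ∑ T : Finset (Fin n), if ∀ i ∉ T, c i = 0 then
          (X 1 : MvPolynomial (Fin 2) ℚ) ^ T.card * (X 0 - X 1) ^ (n - T.card) else 0 := by
  classical
  set S := Finset.univ.filter (fun i => c i ≠ 0) with hS
  have hw : hammingNorm c = S.card := rfl
  have hcond : ∀ T : Finset (Fin n), (∀ i ∉ T, c i = 0) ↔ S ⊆ T := by
    intro T
    constructor
    · intro h i hi
      rw [hS, Finset.mem_filter] at hi
      by_contra hiT
      exact hi.2 (h i hiT)
    · intro h i hi
      by_contra hne
      exact hi (h (by rw [hS, Finset.mem_filter]; exact ⟨Finset.mem_univ i, hne⟩))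
  have hSn : S.card ≤ n := by simpa using Finset.card_le_card (Finset.subset_univ S)
  calc (X 0 : MvPolynomial (Fin 2) ℚ) ^ (n - hammingNorm c) * X 1 ^ hammingNorm c
      = ∑ R ∈ Sᶜ.powerset, (X 1 : MvPolynomial (Fin 2) ℚ) ^ (S ∪ R).card
          * (X 0 - X 1) ^ (n - (S ∪ R).card) := by
        have hcards : ∀ R ∈ Sᶜ.powerset, (S ∪ R).card = S.card + R.card := by
          intro R hR
          rw [Finset.card_union_of_disjoint]
          exact Finset.disjoint_left.mpr (fun i hiS hiR =>
            (Finset.mem_compl.mp (Finset.mem_powerset.mp hR hiR)) hiS)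
        rw [Finset.sum_congr rfl (fun R hR => by rw [hcards R hR])]
        have : ∀ R : Finset (Fin n), R ∈ Sᶜ.powerset →
            (X 1 : MvPolynomial (Fin 2) ℚ) ^ (S.card + R.card)
              * (X 0 - X 1) ^ (n - (S.card + R.card))
            = X 1 ^ S.card * (X 1 ^ R.card * (X 0 - X 1) ^ (Sᶜ.card - R.card)) := by
          intro R hR
          have hRS : R.card ≤ Sᶜ.card := Finset.card_le_card (Finset.mem_powerset.mp hR)
          have hScompl : Sᶜ.card = n - S.card := by simp [Finset.card_compl]
          rw [pow_add, mul_assoc, hScompl, Nat.sub_sub]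
        rw [Finset.sum_congr rfl this, ← Finset.mul_sum, powerset_binomial]
        have hScompl : Sᶜ.card = n - S.card := by simp [Finset.card_compl]
        have hx : (X 1 : MvPolynomial (Fin 2) ℚ) + (X 0 - X 1) = X 0 := by ring
        rw [hScompl, hx, hw, mul_comm]
    _ = ∑ T ∈ Finset.univ.filter (fun T : Finset (Fin n) => S ⊆ T),
          (X 1 : MvPolynomial (Fin 2) ℚ) ^ T.card * (X 0 - X 1) ^ (n - T.card) := by
        refine (Finset.sum_nbij' (fun T => T \ S) (fun R => S ∪ R) ?_ ?_ ?_ ?_ ?_).symm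
        · intro T hT
          simp only [Finset.mem_filter] at hT
          rw [Finset.mem_powerset]
          intro i hi
          rw [Finset.mem_compl]
          exact (Finset.mem_sdiff.mp hi).2
        · intro R hR
          simp only [Finset.mem_filter]
          exact ⟨Finset.mem_univ _, Finset.subset_union_left⟩
        · intro T hT
          simp only [Finset.mem_filter] at hT
          exact Finset.union_sdiff_of_subset hT.2
        · intro R hR
          show (S ∪ R) \ S = R
          rw [Finset.union_sdiff_cancel_left]
          exact Finset.disjoint_left.mpr (fun i hiS hiR =>
            (Finset.mem_compl.mp (Finset.mem_powerset.mp hR hiR)) hiS)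
        · intro T hT
          simp only [Finset.mem_filter] at hT
          show _ = (X 1 : MvPolynomial (Fin 2) ℚ) ^ (S ∪ T \ S).card
            * (X 0 - X 1) ^ (n - (S ∪ T \ S).card)
          rw [Finset.union_sdiff_of_subset hT.2]
    _ = ∑ T : Finset (Fin n), if ∀ i ∉ T, c i = 0 then
          (X 1 : MvPolynomial (Fin 2) ℚ) ^ T.card * (X 0 - X 1) ^ (n - T.card) else 0 := by
        rw [Finset.sum_filter]
        exact Finset.sum_congr rfl (fun T _ => by rw [if_congr (hcond T).symm rfl rfl])

lemma enum_eq_sum_T {n : ℕ} (CF : Finset (Fin n → G)) :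
    ∑ c ∈ CF, (X 0 : MvPolynomial (Fin 2) ℚ) ^ (n - hammingNorm c) * X 1 ^ hammingNorm c
      = ∑ T : Finset (Fin n), ((CF.filter (fun c => ∀ i ∉ T, c i = 0)).card : ℚ) •
          ((X 1 : MvPolynomial (Fin 2) ℚ) ^ T.card * (X 0 - X 1) ^ (n - T.card)) := by
  classical
  rw [Finset.sum_congr rfl (fun c _ => single_word c), Finset.sum_comm]
  apply Finset.sum_congr rfl
  intro T _
  rw [← Finset.sum_filter, Finset.sum_const, Nat.cast_smul_eq_nsmul ℚ]

end Step2

-- Step 3 : power series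
section Step3

open PowerSeries

variable {A : Type*} [CommRing A]

noncomputable def invSer (q : A) : PowerSeries A :=
  PowerSeries.mk (fun m => ∑ j ∈ Finset.range (m + 1), q ^ j)

lemma geo_mul (q : A) :
    (1 - PowerSeries.C q * PowerSeries.X) * PowerSeries.mk (fun m => q ^ m) = 1 := by
  ext m
  rw [sub_mul, one_mul, mul_assoc, map_sub]
  cases m with
  | zero => simp
  | succ m =>
      rw [PowerSeries.coeff_C_mul, PowerSeries.coeff_succ_X_mul, PowerSeries.coeff_mk,
        PowerSeries.coeff_mk, PowerSeries.coeff_one]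
      simp [pow_succ, mul_comm]

lemma one_sub_X_mul_invSer (q : A) :
    (1 - PowerSeries.X) * invSer q = PowerSeries.mk (fun m => q ^ m) := by
  ext m
  rw [sub_mul, one_mul, map_sub]
  cases m with
  | zero => simp [invSer]
  | succ m =>
      rw [PowerSeries.coeff_succ_X_mul, PowerSeries.coeff_mk]
      simp only [invSer, PowerSeries.coeff_mk]
      rw [Finset.sum_range_succ]
      ring

lemma denom_mul_invSer (q : A) :
    ((1 - PowerSeries.X) * (1 - PowerSeries.C q * PowerSeries.X)) * invSer q = 1 := by
  have h : ((1 - PowerSeries.X) * (1 - PowerSeries.C q * PowerSeries.X)) * invSer q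
      = (1 - PowerSeries.C q * PowerSeries.X) * ((1 - PowerSeries.X) * invSer q) := by ring
  rw [h, one_sub_X_mul_invSer, geo_mul]

lemma invOfUnit_eq_invSer (q : A) :
    PowerSeries.invOfUnit ((1 - PowerSeries.X) * (1 - PowerSeries.C q * PowerSeries.X)) 1
      = invSer q := by
  set f := (1 - PowerSeries.X) * (1 - PowerSeries.C q * PowerSeries.X) with hf
  have hc : PowerSeries.constantCoeff f = (1 : Aˣ) := by
    rw [hf]
    simp
  have h1 : f * PowerSeries.invOfUnit f 1 = 1 := PowerSeries.mul_invOfUnit f 1 hc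
  calc PowerSeries.invOfUnit f 1
      = (f * invSer q) * PowerSeries.invOfUnit f 1 := by rw [denom_mul_invSer]; ring
    _ = invSer q * (f * PowerSeries.invOfUnit f 1) := by ring
    _ = invSer q := by rw [h1, mul_one]

end Step3

-- Step 3b : coefficient extraction
section Step3b

variable {A : Type*} [CommRing A]

lemma coeff_formula (q x y : A) (n m : ℕ) :
    PowerSeries.coeff m
        ((PowerSeries.C x * PowerSeries.X + PowerSeries.C y * (1 - PowerSeries.X)) ^ n
          * invSer q)
      = ∑ k ∈ Finset.range (n + 1), if k ≤ m then
          (x - y) ^ k * y ^ (n - k) * (n.choose k : A) *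
            (∑ j ∈ Finset.range (m - k + 1), q ^ j) else 0 := by
  have hP : PowerSeries.C x * PowerSeries.X + PowerSeries.C y * (1 - PowerSeries.X)
      = PowerSeries.C (x - y) * PowerSeries.X + PowerSeries.C y := by
    rw [map_sub]
    ring
  rw [hP, add_pow, Finset.sum_mul, map_sum]
  apply Finset.sum_congr rfl
  intro k _
  have hterm : ((PowerSeries.C (x - y) * PowerSeries.X) ^ k * (PowerSeries.C y) ^ (n - k)
        * ((n.choose k : ℕ) : PowerSeries A)) * invSer q
      = (PowerSeries.C ((x - y) ^ k * y ^ (n - k) * (n.choose k : A)) * invSer q)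
          * PowerSeries.X ^ k := by
    rw [mul_pow, map_mul, map_mul, map_pow, map_pow, map_natCast]
    ring
  rw [hterm, PowerSeries.coeff_mul_X_pow']
  split_ifs with h
  · rw [PowerSeries.coeff_C_mul]
    simp [invSer]
  · rfl

end Step3b


end Aux

open MvPolynomial

/-- The homogeneous weight enumerator `W_C(x,y) = ∑_{c ∈ C} x^(n - wt c) · y^(wt c)`
of a (finite) set of words `C ⊆ Gⁿ`, as a polynomial in `x = X 0`, `y = X 1`. -/
noncomputable def weightEnum {G : Type*} [AddCommGroup G] [Fintype G] [DecidableEq G]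
    (n : ℕ) (C : Set (Fin n → G)) : MvPolynomial (Fin 2) ℚ :=
  ∑ᶠ c ∈ C, X 0 ^ (n - hammingNorm c) * X 1 ^ hammingNorm c

/-- For an additive MDS code `C = MDS(n,d) ≤ Gⁿ` over a group of order
`q` with homogeneous weight enumerator `M_{n,d}(x,y)`, the quantity
`(M_{n,d}(x,y) - xⁿ)/(q-1)` equals the coefficient of `t^(n-d)` in the formal power
series `[xt + y(1-t)]ⁿ / ((1-t)(1-qt))` (the denominator inverted via its constant
coefficient `1`). -/
theorem MDS_enum_as_coefficient {G : Type*} [AddCommGroup G] [Fintype G] [DecidableEq G]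
    [Nontrivial G] (n d : ℕ)
    (C : AddSubgroup (Fin n → G))
    (hcard : Nat.card C = Fintype.card G ^ (n + 1 - d))
    (hmin : IsLeast {w | ∃ c ∈ C, c ≠ 0 ∧ hammingNorm c = w} d) :
    weightEnum n (C : Set (Fin n → G)) - X 0 ^ n
      = MvPolynomial.C ((Fintype.card G : ℚ) - 1) *
        PowerSeries.coeff (R := MvPolynomial (Fin 2) ℚ) (n - d)
          ((PowerSeries.C (X 0) * PowerSeries.X
              + PowerSeries.C (X 1) * (1 - PowerSeries.X)) ^ n *
            PowerSeries.invOfUnit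
              ((1 - PowerSeries.X) *
                (1 - PowerSeries.C ((Fintype.card G : MvPolynomial (Fin 2) ℚ))
                      * PowerSeries.X)) 1) := by
  classical
  set q : ℕ := Fintype.card G with hq
  obtain ⟨⟨c0, hc0C, hc0ne, hc0wt⟩, hlb'⟩ := hmin
  have hlb : ∀ c ∈ C, c ≠ 0 → d ≤ hammingNorm c := fun c hc hne => hlb' ⟨c, hc, hne, rfl⟩
  have hd1 : 1 ≤ d := by
    rcases Nat.eq_zero_or_pos d with h0 | h
    · exact absurd (hammingNorm_eq_zero.mp (by rw [hc0wt, h0])) hc0ne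
    · exact h
  have hdn : d ≤ n := by
    rw [← hc0wt]
    simpa using (hammingNorm_le_card_fintype (x := c0))
  -- the code as a Finset
  set CF : Finset (Fin n → G) := (Set.toFinite (C : Set (Fin n → G))).toFinset with hCFdef
  have hCF : ∀ c, c ∈ CF ↔ c ∈ C := by
    intro c
    rw [hCFdef, Set.Finite.mem_toFinset]
    rfl
  have hCset : (C : Set (Fin n → G)) = ↑CF := by
    ext c
    simp [hCF]
  -- Left hand side
  have hLHS : weightEnum n (C : Set (Fin n → G))
      = ∑ m ∈ Finset.range (n + 1), (n.choose m) •
          (((q : ℚ) ^ (m + 1 - d)) •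
            ((X 1 : MvPolynomial (Fin 2) ℚ) ^ m * (X 0 - X 1) ^ (n - m))) := by
    rw [weightEnum, hCset, finsum_mem_coe_finset, enum_eq_sum_T]
    have hcards : ∀ T : Finset (Fin n),
        ((CF.filter (fun c => ∀ i ∉ T, c i = 0)).card : ℚ) = (q : ℚ) ^ (T.card + 1 - d) := by
      intro T
      rw [card_filter_support C CF hCF hcard hlb hd1 hdn T]
      push_cast
      rfl
    rw [Finset.sum_congr rfl (fun T _ => by rw [hcards T])]
    rw [← Finset.powerset_univ,
      Finset.sum_powerset_apply_card
        (fun m => ((q : ℚ) ^ (m + 1 - d)) •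
          ((X 1 : MvPolynomial (Fin 2) ℚ) ^ m * (X 0 - X 1) ^ (n - m)))]
    simp [Finset.card_univ]
  -- X 0 ^ n as a binomial sum
  have hX0 : (X 0 : MvPolynomial (Fin 2) ℚ) ^ n
      = ∑ m ∈ Finset.range (n + 1),
          (X 1 : MvPolynomial (Fin 2) ℚ) ^ m * (X 0 - X 1) ^ (n - m)
            * ((n.choose m : ℕ) : MvPolynomial (Fin 2) ℚ) := by
    have h := add_pow (X 1 : MvPolynomial (Fin 2) ℚ) (X 0 - X 1) n
    rw [show (X 1 : MvPolynomial (Fin 2) ℚ) + (X 0 - X 1) = X 0 by ring] at h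
    exact h
  -- Right hand side
  rw [invOfUnit_eq_invSer, coeff_formula]
  rw [hLHS, hX0, Finset.mul_sum, ← Finset.sum_sub_distrib]
  rw [← Finset.sum_range_reflect (fun k =>
    MvPolynomial.C ((q : ℚ) - 1) *
      (if k ≤ n - d then
        ((X 0 : MvPolynomial (Fin 2) ℚ) - X 1) ^ k * X 1 ^ (n - k) * (n.choose k : MvPolynomial (Fin 2) ℚ) *
          (∑ j ∈ Finset.range (n - d - k + 1), ((q : MvPolynomial (Fin 2) ℚ)) ^ j)
        else 0)) (n + 1)]
  apply Finset.sum_congr rfl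
  intro m hm
  rw [Finset.mem_range] at hm
  have hmn : m ≤ n := by omega
  simp only [Nat.add_sub_cancel]
  rcases lt_or_ge m d with hmd | hmd
  · -- m < d : both sides are zero
    have hcond : ¬ (n - m ≤ n - d) := by omega
    rw [if_neg hcond, mul_zero]
    have hexp : m + 1 - d = 0 := by omega
    rw [hexp, pow_zero, one_smul, nsmul_eq_mul]
    push_cast
    ring
  · -- d ≤ m
    have hcond : n - m ≤ n - d := by omega
    rw [if_pos hcond]
    have h1 : n - (n - m) = m := by omega
    have h2 : n - d - (n - m) = m - d := by omega
    have h3 : n.choose (n - m) = n.choose m := Nat.choose_symm hmn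
    have hexp : m + 1 - d = m - d + 1 := by omega
    have hgeom : (∑ j ∈ Finset.range (m - d + 1), ((q : MvPolynomial (Fin 2) ℚ)) ^ j)
        = MvPolynomial.C (∑ j ∈ Finset.range (m - d + 1), (q : ℚ) ^ j) := by
      rw [map_sum]
      apply Finset.sum_congr rfl
      intro j _
      rw [map_pow, map_natCast]
    rw [h1, h2, h3, hexp, nsmul_eq_mul, MvPolynomial.smul_eq_C_mul, hgeom]
    have hscal : ((q : ℚ) - 1) * (∑ j ∈ Finset.range (m - d + 1), (q : ℚ) ^ j)
        = (q : ℚ) ^ (m - d + 1) - 1 := mul_geom_sum _ _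
    have hcast : MvPolynomial.C ((q : ℚ) ^ (m - d + 1))
        = MvPolynomial.C ((q : ℚ) ^ (m - d + 1) - 1) + (1 : MvPolynomial (Fin 2) ℚ) := by
      rw [map_sub, map_one]
      ring
    calc (n.choose m : MvPolynomial (Fin 2) ℚ) *
          (MvPolynomial.C ((q : ℚ) ^ (m - d + 1)) * (X 1 ^ m * (X 0 - X 1) ^ (n - m)))
          - X 1 ^ m * (X 0 - X 1) ^ (n - m) * ((n.choose m : ℕ) : MvPolynomial (Fin 2) ℚ)
        = (n.choose m : MvPolynomial (Fin 2) ℚ) *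
            (MvPolynomial.C ((q : ℚ) ^ (m - d + 1) - 1) * (X 1 ^ m * (X 0 - X 1) ^ (n - m))) := by
          rw [hcast]
          ring
      _ = (n.choose m : MvPolynomial (Fin 2) ℚ) *
            (MvPolynomial.C (((q : ℚ) - 1) * (∑ j ∈ Finset.range (m - d + 1), (q : ℚ) ^ j))
              * (X 1 ^ m * (X 0 - X 1) ^ (n - m))) := by rw [hscal]
      _ = MvPolynomial.C ((q : ℚ) - 1) *
            ((X 0 - X 1) ^ (n - m) * X 1 ^ m * (n.choose m : MvPolynomial (Fin 2) ℚ) *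
              MvPolynomial.C (∑ j ∈ Finset.range (m - d + 1), (q : ℚ) ^ j)) := by
          rw [map_mul]
          ring
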